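/- For every integer n ≥ 1 there is a surjective ℝ-algebra homomorphism from A_ℝ onto the matrix algebra M_n(ℂ) (M_n(ℂ) regarded as an ℝ-algebra). -/

import Mathlib

/- The Fano-plane structure constants ε^{ijk}.  Indices `0,…,6` correspond to labels `1,…,7`,
so the directed lines 123, 145, 167, 246, 275, 374, 365 become the triples below. -/
def fanoTriples : List (Fin 7 × Fin 7 × Fin 7) :=
  [(0, 1, 2), (0, 3, 4), (0, 5, 6), (1, 3, 5), (1, 6, 4), (2, 6, 3), (2, 5, 4)]

/-- All cyclic permutations of the directed Fano lines. -/
def fanoPlus : List (Fin 7 × Fin 7 × Fin 7) :=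
  fanoTriples.flatMap fun t => [(t.1, t.2.1, t.2.2), (t.2.1, t.2.2, t.1), (t.2.2, t.1, t.2.1)]

/-- The totally antisymmetric symbol `ε^{ijk}`. -/
def eps (i j k : Fin 7) : ℤ :=
  if (i, j, k) ∈ fanoPlus then 1 else if (j, i, k) ∈ fanoPlus then -1 else 0

/-- The defining relation `r_ℓ = Σ_{m,n} ε^{ℓmn} x_m x_n` in the free algebra on `x_1,…,x_7`. -/
noncomputable def relElem (k : Type*) [Field k] (ℓ : Fin 7) : FreeAlgebra k (Fin 7) :=
  ∑ m : Fin 7, ∑ n : Fin 7, eps ℓ m n • (FreeAlgebra.ι k m * FreeAlgebra.ι k n)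

/-- The relation identifying each `r_ℓ` with `0`; quotienting by it imposes the two-sided
ideal generated by `r_1, …, r_7`. -/
inductive Arel (k : Type*) [Field k] : FreeAlgebra k (Fin 7) → FreeAlgebra k (Fin 7) → Prop
  | mk (ℓ : Fin 7) : Arel k (relElem k ℓ) 0

/-- The algebra `A_k = k⟨x_1,…,x_7⟩/(r_1,…,r_7)`. -/
abbrev SmithA (k : Type*) [Field k] : Type _ := RingQuot (Arel k)

/-- The images of the generators `x_i` in `A_k`. -/
noncomputable def xg (k : Type*) [Field k] (i : Fin 7) : SmithA k :=
  RingQuot.mkAlgHom k (Arel k) (FreeAlgebra.ι k i)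

open Matrix
open Fin.NatCast Fin.CommRing

namespace SmithAux

variable {n : ℕ} [NeZero n]

/-- the cyclic shift matrix -/
noncomputable def shiftM (n : ℕ) [NeZero n] : Matrix (Fin n) (Fin n) ℂ :=
  ∑ b : Fin n, single (b + 1) b 1

lemma shift_mul (j k : Fin n) :
    shiftM n * single j k (1:ℂ) = single (j + 1) k 1 := by
  rw [shiftM, Finset.sum_mul, Finset.sum_eq_single j]
  · rw [single_mul_single_same, one_mul]
  · intro b _ hb
    exact single_mul_single_of_ne _ _ _ _ hb 1
  · simp

lemma mul_shift (j k : Fin n) :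
    single j k (1:ℂ) * shiftM n = single j (k - 1) 1 := by
  rw [shiftM, Finset.mul_sum, Finset.sum_eq_single (k - 1)]
  · rw [sub_add_cancel, single_mul_single_same, one_mul]
  · intro b _ hb
    refine single_mul_single_of_ne _ _ _ _ ?_ 1
    intro h
    exact hb (by rw [h]; ring)
  · simp

/-- the seven generator images -/
noncomputable def gen (n : ℕ) [NeZero n] : Fin 7 → Matrix (Fin n) (Fin n) ℂ
  | 0 => Complex.I • 1
  | 1 => 0
  | 2 => 0
  | 3 => single 0 0 1
  | 4 => shiftM n
  | 5 => Complex.I • single 0 0 1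
  | 6 => Complex.I • shiftM n

@[simp] lemma gen_0 : gen n 0 = Complex.I • 1 := rfl
@[simp] lemma gen_1 : gen n 1 = 0 := rfl
@[simp] lemma gen_2 : gen n 2 = 0 := rfl
@[simp] lemma gen_3 : gen n 3 = single 0 0 1 := rfl
@[simp] lemma gen_4 : gen n 4 = shiftM n := rfl
@[simp] lemma gen_5 : gen n 5 = Complex.I • single 0 0 1 := rfl
@[simp] lemma gen_6 : gen n 6 = Complex.I • shiftM n := rfl

set_option maxHeartbeats 1000000 in
lemma gen_rel (ℓ : Fin 7) :
    ∑ m : Fin 7, ∑ m' : Fin 7, eps ℓ m m' • (gen n m * gen n m') = 0 := by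
  fin_cases ℓ <;>
  · simp only [Fin.sum_univ_seven]
    simp (config := { decide := true }) only [eps, gen_0, gen_1, gen_2, gen_3, gen_4,
      gen_5, gen_6, if_true, if_false]
    simp only [one_smul, neg_smul, zero_smul, smul_mul_assoc, mul_smul_comm, smul_smul,
      Complex.I_mul_I, zero_mul, mul_zero, smul_zero, mul_one, one_mul, neg_neg]
    abel

/-- The algebra homomorphism `A_ℝ → M_n(ℂ)`. -/
noncomputable def theHom (n : ℕ) [NeZero n] : SmithA ℝ →ₐ[ℝ] Matrix (Fin n) (Fin n) ℂ :=
  RingQuot.liftAlgHom ℝ ⟨FreeAlgebra.lift ℝ (gen n), by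
    rintro x y ⟨ℓ⟩
    rw [relElem, map_zero, map_sum]
    simp only [map_sum, map_zsmul, _root_.map_mul, FreeAlgebra.lift_ι_apply]
    exact gen_rel ℓ⟩

lemma theHom_xg (i : Fin 7) : theHom n (xg ℝ i) = gen n i := by
  rw [xg, theHom, RingQuot.liftAlgHom_mkAlgHom_apply, FreeAlgebra.lift_ι_apply]

lemma theHom_surj : Function.Surjective (theHom n) := by
  set R := (theHom n).range with hR
  have hI : (Complex.I • 1 : Matrix (Fin n) (Fin n) ℂ) ∈ R := ⟨xg ℝ 0, theHom_xg 0⟩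
  have hE : (single 0 0 1 : Matrix (Fin n) (Fin n) ℂ) ∈ R := ⟨xg ℝ 3, theHom_xg 3⟩
  have hN : shiftM n ∈ R := ⟨xg ℝ 4, theHom_xg 4⟩
  have key : ∀ a b : ℕ,
      single ((a : Fin n)) ((0 : Fin n) - (b : Fin n)) (1 : ℂ) ∈ R := by
    have base : ∀ b : ℕ, single (0 : Fin n) ((0 : Fin n) - (b : Fin n)) (1 : ℂ) ∈ R := by
      intro b
      induction b with
      | zero => simpa using hE
      | succ b ih =>
          have h := mul_shift (n := n) (0 : Fin n) ((0 : Fin n) - (b : Fin n))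
          have : ((0 : Fin n) - (b : Fin n)) - 1 = (0 : Fin n) - ((b + 1 : ℕ) : Fin n) := by
            push_cast; ring
          rw [this] at h
          rw [← h]
          exact R.mul_mem ih hN
    intro a b
    induction a with
    | zero => simpa using base b
    | succ a ih =>
        have h := shift_mul (n := n) ((a : Fin n)) ((0 : Fin n) - (b : Fin n))
        have : ((a : Fin n)) + 1 = ((a + 1 : ℕ) : Fin n) := by push_cast; ring
        rw [this] at h
        rw [← h]
        exact R.mul_mem hN ih
  have memE : ∀ j k : Fin n, single j k (1 : ℂ) ∈ R := by
    intro j k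
    have h1 : ((j.val : ℕ) : Fin n) = j := Fin.cast_val_eq_self j
    have h2 : (0 : Fin n) - (((n - k.val : ℕ) : Fin n)) = k := by
      rw [Nat.cast_sub (le_of_lt k.isLt), Fin.natCast_self, Fin.cast_val_eq_self,
        sub_sub_cancel]
    have := key j.val (n - k.val)
    rwa [h1, h2] at this
  have hstd : ∀ (j k : Fin n) (c : ℂ), single j k c ∈ R := by
    intro j k c
    set X : Matrix (Fin n) (Fin n) ℂ := single j k 1 with hX
    have hc : single j k c = c • X := by
      rw [hX, smul_single, smul_eq_mul, mul_one]
    have hsplit : c • X = c.re • X + c.im • ((Complex.I • 1) * X) := by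
      rw [smul_mul_assoc, one_mul]
      rw [← algebraMap_smul ℂ c.re X, ← algebraMap_smul ℂ c.im (Complex.I • X),
        Complex.coe_algebraMap, smul_smul, ← add_smul, Complex.re_add_im]
    rw [hc, hsplit]
    exact R.add_mem (R.smul_mem (memE j k) c.re)
      (R.smul_mem (R.mul_mem hI (memE j k)) c.im)
  intro M
  have : M ∈ R := by
    rw [matrix_eq_sum_single M]
    exact Subalgebra.sum_mem _ fun j _ => Subalgebra.sum_mem _ fun k _ => hstd j k (M j k)
  exact this

end SmithAux

/-- STATEMENT 13: for every integer `n ≥ 1` there is a surjective homomorphism of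
`ℝ`-algebras from `A_ℝ` onto the matrix algebra `M_n(ℂ)`. -/
theorem SmithA_surjects_onto_complex_matrices (n : ℕ) (hn : 1 ≤ n) :
    ∃ f : SmithA ℝ →ₐ[ℝ] Matrix (Fin n) (Fin n) ℂ, Function.Surjective f := by
  haveI : NeZero n := ⟨by omega⟩
  exact ⟨SmithAux.theHom n, SmithAux.theHom_surj⟩
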